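/- arXiv:2401.00838 — 2 statements merged into one kernel-verified Lean document; each statement's English description precedes it below -/
import Mathlib

section
/- Let V₀ ∈ 𝔳. Then the identity ⟨v, V₀⟩·[v, V₀] + ‖V₀‖²·[v, P_{V₀}(v)] = 0 holds for every v ∈ 𝔳 if and only if V₀ satisfies the J²-condition. -/
open RealInnerProductSpace

section Aux

variable {𝕍 𝕫 : Type*} [NormedAddCommGroup 𝕍] [InnerProductSpace ℝ 𝕍]
  [NormedAddCommGroup 𝕫] [InnerProductSpace ℝ 𝕫]

lemma aux_innJJsame (J : 𝕫 →ₗ[ℝ] 𝕍 →ₗ[ℝ] 𝕍)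
    (hJnorm : ∀ (z : 𝕫) (v : 𝕍), ‖J z v‖ = ‖z‖ * ‖v‖) (z : 𝕫) (u v : 𝕍) :
    ⟪J z u, J z v⟫ = ‖z‖ ^ 2 * ⟪u, v⟫ := by
  have h1 := norm_add_sq_real (J z u) (J z v)
  have h2 := norm_add_sq_real u v
  have hadd : J z u + J z v = J z (u + v) := (map_add (J z) u v).symm
  rw [hadd, hJnorm, hJnorm, hJnorm, mul_pow, mul_pow, mul_pow, h2] at h1
  nlinarith [h1]

lemma aux_skew (J : 𝕫 →ₗ[ℝ] 𝕍 →ₗ[ℝ] 𝕍)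
    (hJsq : ∀ (z : 𝕫) (v : 𝕍), J z (J z v) = -(‖z‖ ^ 2) • v)
    (hJnorm : ∀ (z : 𝕫) (v : 𝕍), ‖J z v‖ = ‖z‖ * ‖v‖) (z : 𝕫) (u v : 𝕍) :
    ⟪J z u, v⟫ = -⟪u, J z v⟫ := by
  by_cases hz : z = 0
  · simp [hz]
  have hz2 : (‖z‖ : ℝ) ^ 2 ≠ 0 := pow_ne_zero _ (norm_ne_zero_iff.2 hz)
  have hv : (-(‖z‖ ^ 2)⁻¹ : ℝ) • J z (J z v) = v := by
    rw [hJsq, smul_smul, neg_mul_neg, inv_mul_cancel₀ hz2, one_smul]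
  calc ⟪J z u, v⟫ = ⟪J z u, (-(‖z‖ ^ 2)⁻¹ : ℝ) • J z (J z v)⟫ := by rw [hv]
    _ = (-(‖z‖ ^ 2)⁻¹ : ℝ) * ⟪J z u, J z (J z v)⟫ := real_inner_smul_right _ _ _
    _ = (-(‖z‖ ^ 2)⁻¹ : ℝ) * (‖z‖ ^ 2 * ⟪u, J z v⟫) := by
        rw [aux_innJJsame J hJnorm]
    _ = -⟪u, J z v⟫ := by field_simp

lemma aux_anticomm (J : 𝕫 →ₗ[ℝ] 𝕍 →ₗ[ℝ] 𝕍)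
    (hJsq : ∀ (z : 𝕫) (v : 𝕍), J z (J z v) = -(‖z‖ ^ 2) • v) (z₁ z₂ : 𝕫) (v : 𝕍) :
    J z₁ (J z₂ v) + J z₂ (J z₁ v) = (-(2 * ⟪z₁, z₂⟫)) • v := by
  have h := hJsq (z₁ + z₂) v
  simp only [map_add, LinearMap.add_apply] at h
  rw [hJsq z₁ v, hJsq z₂ v, norm_add_sq_real] at h
  have h' := h
  linear_combination (norm := module) h'

lemma aux_innJJ (J : 𝕫 →ₗ[ℝ] 𝕍 →ₗ[ℝ] 𝕍)
    (hJsq : ∀ (z : 𝕫) (v : 𝕍), J z (J z v) = -(‖z‖ ^ 2) • v)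
    (hJnorm : ∀ (z : 𝕫) (v : 𝕍), ‖J z v‖ = ‖z‖ * ‖v‖) (z₁ z₂ : 𝕫) (v : 𝕍) :
    ⟪J z₁ v, J z₂ v⟫ = ⟪z₁, z₂⟫ * ‖v‖ ^ 2 := by
  have h1 := aux_skew J hJsq hJnorm z₁ v (J z₂ v)
  have h2 := aux_skew J hJsq hJnorm z₂ v (J z₁ v)
  have h3 : ⟪v, J z₁ (J z₂ v) + J z₂ (J z₁ v)⟫ = -(2 * ⟪z₁, z₂⟫) * ‖v‖ ^ 2 := by
    rw [aux_anticomm J hJsq, real_inner_smul_right, real_inner_self_eq_norm_sq]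
  rw [inner_add_right] at h3
  have h4 : ⟪J z₂ v, J z₁ v⟫ = ⟪J z₁ v, J z₂ v⟫ := real_inner_comm _ _
  linarith

end Aux

/-- For `V₀ ∈ 𝔳`, the identity `⟨v,V₀⟩ [v,V₀] + ‖V₀‖² [v, P_{V₀}(v)] = 0` holds for
every `v ∈ 𝔳` if and only if `V₀` satisfies the `J²`-condition; here `P_{V₀}` is the
orthogonal projection of `𝔳` onto `J_𝔷V₀`. -/
theorem stmt_16
    {𝕍 𝕫 : Type*} [NormedAddCommGroup 𝕍] [InnerProductSpace ℝ 𝕍] [FiniteDimensional ℝ 𝕍]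
    [NormedAddCommGroup 𝕫] [InnerProductSpace ℝ 𝕫] [FiniteDimensional ℝ 𝕫]
    (J : 𝕫 →ₗ[ℝ] 𝕍 →ₗ[ℝ] 𝕍)
    (hJsq : ∀ (z : 𝕫) (v : 𝕍), J z (J z v) = -(‖z‖ ^ 2) • v)
    (hJnorm : ∀ (z : 𝕫) (v : 𝕍), ‖J z v‖ = ‖z‖ * ‖v‖)
    (br : 𝕍 →ₗ[ℝ] 𝕍 →ₗ[ℝ] 𝕫)
    (hbr : ∀ (U V : 𝕍) (Z : 𝕫), ⟪br U V, Z⟫ = ⟪J Z U, V⟫)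
    (V₀ : 𝕍) :
    (∀ v : 𝕍,
        ⟪v, V₀⟫ • br v V₀ +
          ‖V₀‖ ^ 2 •
            br v ((Submodule.orthogonalProjectionOnto (LinearMap.range (J.flip V₀)) v : 𝕍)) = 0) ↔
      (∀ z₁ z₂ : 𝕫, ⟪z₁, z₂⟫ = 0 → ∃ z₃ : 𝕫, J z₁ (J z₂ V₀) = J z₃ V₀) := by
  have skew : ∀ (z : 𝕫) (u v : 𝕍), ⟪J z u, v⟫ = -⟪u, J z v⟫ := aux_skew J hJsq hJnorm
  have innJJ : ∀ (z₁ z₂ : 𝕫) (v : 𝕍), ⟪J z₁ v, J z₂ v⟫ = ⟪z₁, z₂⟫ * ‖v‖ ^ 2 :=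
    aux_innJJ J hJsq hJnorm
  have skew_self : ∀ (z : 𝕫) (v : 𝕍), ⟪J z v, v⟫ = 0 := by
    intro z v
    have h1 := skew z v v
    have h2 := real_inner_comm (J z v) v
    linarith
  set W := LinearMap.range (J.flip V₀) with hWdef
  have memW : ∀ z : 𝕫, J z V₀ ∈ W := fun z => ⟨z, rfl⟩
  have hWform : ∀ x ∈ W, ∃ z : 𝕫, J z V₀ = x := by
    rintro x ⟨z, rfl⟩
    exact ⟨z, rfl⟩
  constructor
  · -- the identity implies the J² condition
    intro hid z₁ z₂ hz12
    by_cases h0 : V₀ = 0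
    · exact ⟨0, by simp [h0]⟩
    have hn0 : (‖V₀‖ : ℝ) ^ 2 ≠ 0 := pow_ne_zero _ (norm_ne_zero_iff.2 h0)
    set S := W ⊔ (ℝ ∙ V₀) with hSdef
    have hxS : J z₁ (J z₂ V₀) ∈ S := by
      rw [← Submodule.orthogonal_orthogonal S, Submodule.mem_orthogonal]
      intro u hu
      have huW : ∀ z : 𝕫, ⟪u, J z V₀⟫ = 0 := fun z =>
        Submodule.inner_left_of_mem_orthogonal (Submodule.mem_sup_left (memW z)) hu
      have huV₀ : ⟪u, V₀⟫ = 0 :=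
        Submodule.inner_left_of_mem_orthogonal
          (Submodule.mem_sup_right (Submodule.mem_span_singleton_self V₀)) hu
      set v := u + J z₂ V₀ with hvdef
      have hP : (Submodule.orthogonalProjectionOnto W v : 𝕍) = J z₂ V₀ := by
        apply Submodule.eq_starProjection_of_mem_of_inner_eq_zero (memW z₂)
        intro w hw
        obtain ⟨zw, rfl⟩ := hWform w hw
        have : v - J z₂ V₀ = u := by rw [hvdef]; abel
        rw [this]
        exact huW zw
      have hid' := hid v
      rw [hP] at hid'
      have hvV₀ : ⟪v, V₀⟫ = 0 := by
        rw [hvdef, inner_add_left, huV₀, skew_self, add_zero]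
      rw [hvV₀, zero_smul, zero_add] at hid'
      have hbrv : br v (J z₂ V₀) = 0 := by
        rcases smul_eq_zero.mp hid' with h | h
        · exact absurd h hn0
        · exact h
      have h1 : ⟪J z₁ v, J z₂ V₀⟫ = 0 := by
        rw [← hbr, hbrv, inner_zero_left]
      have hexp : J z₁ v = J z₁ u + J z₁ (J z₂ V₀) := map_add _ _ _
      rw [hexp, inner_add_left, skew_self] at h1
      have h2 := skew z₁ u (J z₂ V₀)
      linarith
    rw [hSdef, Submodule.mem_sup] at hxS
    obtain ⟨y, hy, s, hs, hsum⟩ := hxS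
    obtain ⟨t, rfl⟩ := Submodule.mem_span_singleton.mp hs
    have hxV₀ : ⟪J z₁ (J z₂ V₀), V₀⟫ = 0 := by
      have hcomm : ⟪z₂, z₁⟫ = (0 : ℝ) := (real_inner_comm z₁ z₂).trans hz12
      rw [skew, innJJ, hcomm]
      ring
    have hyV₀ : ⟪y, V₀⟫ = 0 := by
      obtain ⟨zy, hzy⟩ := hWform y hy
      rw [← hzy]; exact skew_self zy V₀
    have ht : t = 0 := by
      have h : ⟪y + t • V₀, V₀⟫ = 0 := by rw [hsum]; exact hxV₀
      rw [inner_add_left, hyV₀, real_inner_smul_left, real_inner_self_eq_norm_sq,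
        zero_add] at h
      exact (mul_eq_zero.mp h).resolve_right hn0
    obtain ⟨z₃, hz₃⟩ := hWform y hy
    refine ⟨z₃, ?_⟩
    rw [hz₃, ← hsum, ht, zero_smul, add_zero]
  · -- the J² condition implies the identity
    intro hJ2 v
    by_cases h0 : V₀ = 0
    · simp [h0]
    have hn0 : (‖V₀‖ : ℝ) ^ 2 ≠ 0 := pow_ne_zero _ (norm_ne_zero_iff.2 h0)
    obtain ⟨w, hw⟩ := hWform _ (Submodule.orthogonalProjectionOnto W v).2
    set a : ℝ := ⟪v, V₀⟫ / ‖V₀‖ ^ 2 with ha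
    set u : 𝕍 := v - a • V₀ - J w V₀ with hu
    have hved : v = u + a • V₀ + J w V₀ := by rw [hu]; abel
    have huW : ∀ z : 𝕫, ⟪u, J z V₀⟫ = 0 := by
      intro z
      have h1 : v - (Submodule.orthogonalProjectionOnto W v : 𝕍) ∈ Wᗮ :=
        Submodule.sub_starProjection_mem_orthogonal v
      have h2 : ⟪v - J w V₀, J z V₀⟫ = 0 := by
        rw [hw]
        exact Submodule.inner_left_of_mem_orthogonal (memW z) h1
      have h3 : ⟪a • V₀, J z V₀⟫ = 0 := by
        rw [real_inner_smul_left, real_inner_comm]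
        rw [skew_self]
        ring
      have h4 : u = (v - J w V₀) - a • V₀ := by rw [hu]; abel
      rw [h4, inner_sub_left, h2, h3, sub_zero]
    have huV₀ : ⟪u, V₀⟫ = 0 := by
      have hJwV₀ : ⟪J w V₀, V₀⟫ = 0 := skew_self w V₀
      rw [hu, inner_sub_left, inner_sub_left, real_inner_smul_left,
        real_inner_self_eq_norm_sq, hJwV₀, ha]
      field_simp
      ring
    have hkey : ∀ z : 𝕫, ⟪u, J z (J w V₀)⟫ = 0 := by
      intro z
      by_cases hw0 : w = 0
      · simp [hw0]
      have hwn : (‖w‖ : ℝ) ^ 2 ≠ 0 := pow_ne_zero _ (norm_ne_zero_iff.2 hw0)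
      set c : ℝ := ⟪z, w⟫ / ‖w‖ ^ 2 with hc
      have hperp : ⟪z - c • w, w⟫ = 0 := by
        rw [inner_sub_left, real_inner_smul_left, real_inner_self_eq_norm_sq, hc]
        field_simp
        ring
      obtain ⟨z₃, hz₃⟩ := hJ2 (z - c • w) w hperp
      have hdec : J z (J w V₀) = J z₃ V₀ + c • J w (J w V₀) := by
        have hzdec : z = (z - c • w) + c • w := by abel
        conv_lhs => rw [hzdec]
        rw [map_add, LinearMap.add_apply, hz₃, map_smul, LinearMap.smul_apply]
      rw [hdec, hJsq w V₀, inner_add_right, huW z₃, real_inner_smul_right,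
        real_inner_smul_right, huV₀]
      ring
    have hvV₀ : ⟪v, V₀⟫ = a * ‖V₀‖ ^ 2 := by
      rw [ha, div_mul_cancel₀ _ hn0]
    rw [← hw]
    have hall : ∀ z : 𝕫, ⟪⟪v, V₀⟫ • br v V₀ + ‖V₀‖ ^ 2 • br v (J w V₀), z⟫ = 0 := by
      intro z
      rw [inner_add_left, real_inner_smul_left, real_inner_smul_left, hbr, hbr]
      have hJzv : J z v = J z u + a • J z V₀ + J z (J w V₀) := by
        rw [hved, map_add, map_add, map_smul]
      have e1 : ⟪J z v, V₀⟫ = -(⟪w, z⟫ * ‖V₀‖ ^ 2) := by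
        rw [hJzv, inner_add_left, inner_add_left, real_inner_smul_left, skew_self,
          skew z u V₀, huW z, skew z (J w V₀) V₀, innJJ w z V₀]
        ring
      have e2 : ⟪J z v, J w V₀⟫ = a * (⟪z, w⟫ * ‖V₀‖ ^ 2) := by
        rw [hJzv, inner_add_left, inner_add_left, real_inner_smul_left,
          skew z u (J w V₀), hkey z, skew_self, innJJ]
        ring
      rw [e1, e2, hvV₀, real_inner_comm w z]
      ring
    have := hall (⟪v, V₀⟫ • br v V₀ + ‖V₀‖ ^ 2 • br v (J w V₀))
    exact inner_self_eq_zero.mp this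
end

section
/- Let v ∈ 𝔳 be nonzero. The following are equivalent: (i) for every unit vector (v', z', s') ∈ 𝔳 × 𝔷 × ℝ with ⟨v', v⟩ = 0 and [v', v] = 0, and for every θ ∈ (−1, 1), the 𝔳-component V(θ) = (2θ(1−s'θ)/χ(θ))·v' + (2θ²/χ(θ))·J_{z'}(v') of the reparametrized geodesic γ with data (v', z', s') satisfies [V(θ), v] = 0 and ⟨V(θ), v⟩ = 0; (ii) v satisfies the J²-condition. (Equivalently: the focal variety F(v) = {(V, Z, t) : t > 0, [V, v] = 0, ⟨V, v⟩ = 0} — and hence every focal variety F_⊛^η obtained from it by left translation — is totally geodesic if and only if v satisfies the J²-condition.) -/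
open RealInnerProductSpace

section Aux

variable {𝕍 𝕫 : Type*} [NormedAddCommGroup 𝕍] [InnerProductSpace ℝ 𝕍]
  [NormedAddCommGroup 𝕫] [InnerProductSpace ℝ 𝕫]

lemma auxA (J : 𝕫 →ₗ[ℝ] 𝕍 →ₗ[ℝ] 𝕍)
    (hJnorm : ∀ (z : 𝕫) (v : 𝕍), ‖J z v‖ = ‖z‖ * ‖v‖) (z : 𝕫) (a b : 𝕍) :
    ⟪J z a, J z b⟫ = ‖z‖ ^ 2 * ⟪a, b⟫ := by
  have h : ∀ x : 𝕍, ⟪J z x, J z x⟫ = ‖z‖ ^ 2 * ⟪x, x⟫ := fun x => by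
    rw [real_inner_self_eq_norm_sq, real_inner_self_eq_norm_sq, hJnorm]; ring
  have hab := h (a + b)
  simp only [map_add] at hab
  rw [real_inner_add_add_self, real_inner_add_add_self] at hab
  have ha := h a
  have hb := h b
  linear_combination (hab - ha - hb) / 2

lemma auxB (J : 𝕫 →ₗ[ℝ] 𝕍 →ₗ[ℝ] 𝕍)
    (hJsq : ∀ (z : 𝕫) (v : 𝕍), J z (J z v) = -(‖z‖ ^ 2) • v)
    (hJnorm : ∀ (z : 𝕫) (v : 𝕍), ‖J z v‖ = ‖z‖ * ‖v‖) (z : 𝕫) (x : 𝕍) :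
    ⟪J z x, x⟫ = 0 := by
  rcases eq_or_ne z 0 with rfl | hz
  · simp
  · have h := auxA J hJnorm z (J z x) x
    rw [hJsq, real_inner_smul_left] at h
    have hcomm : ⟪J z x, x⟫ = ⟪x, J z x⟫ := real_inner_comm x (J z x)
    rw [← hcomm] at h
    have hz2 : (0:ℝ) < ‖z‖ ^ 2 := by
      have : 0 < ‖z‖ := norm_pos_iff.2 hz
      positivity
    have h2 : ‖z‖ ^ 2 * ⟪J z x, x⟫ = 0 := by linarith
    rcases mul_eq_zero.mp h2 with h3 | h3
    · exact absurd h3 hz2.ne'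
    · exact h3

lemma auxC (J : 𝕫 →ₗ[ℝ] 𝕍 →ₗ[ℝ] 𝕍)
    (hJsq : ∀ (z : 𝕫) (v : 𝕍), J z (J z v) = -(‖z‖ ^ 2) • v)
    (hJnorm : ∀ (z : 𝕫) (v : 𝕍), ‖J z v‖ = ‖z‖ * ‖v‖) (z : 𝕫) (a b : 𝕍) :
    ⟪J z a, b⟫ = -⟪a, J z b⟫ := by
  have h := auxB J hJsq hJnorm z (a + b)
  simp only [map_add] at h
  rw [inner_add_left, inner_add_right, inner_add_right] at h
  have ha := auxB J hJsq hJnorm z a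
  have hb := auxB J hJsq hJnorm z b
  have hc := real_inner_comm (J z b) a
  linarith

lemma auxD (J : 𝕫 →ₗ[ℝ] 𝕍 →ₗ[ℝ] 𝕍)
    (hJnorm : ∀ (z : 𝕫) (v : 𝕍), ‖J z v‖ = ‖z‖ * ‖v‖) (z₁ z₂ : 𝕫) (x : 𝕍) :
    ⟪J z₁ x, J z₂ x⟫ = ⟪z₁, z₂⟫ * ‖x‖ ^ 2 := by
  have h1 : ‖J (z₁ + z₂) x‖ ^ 2 = ‖z₁ + z₂‖ ^ 2 * ‖x‖ ^ 2 := by rw [hJnorm]; ring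
  simp only [map_add, LinearMap.add_apply] at h1
  rw [norm_add_sq_real, norm_add_sq_real] at h1
  have e1 : ‖J z₁ x‖ ^ 2 = ‖z₁‖ ^ 2 * ‖x‖ ^ 2 := by rw [hJnorm]; ring
  have e2 : ‖J z₂ x‖ ^ 2 = ‖z₂‖ ^ 2 * ‖x‖ ^ 2 := by rw [hJnorm]; ring
  linear_combination (h1 - e1 - e2) / 2

end Aux

/-- For `v ∈ 𝔳` nonzero, the focal variety `F(v) = {(V,Z,t) : t > 0, [V,v] = 0,
⟨V,v⟩ = 0}` is totally geodesic — i.e. for every unit `(v',z',s')` with `⟨v',v⟩ = 0`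
and `[v',v] = 0` and every `θ ∈ (-1,1)`, the `𝔳`-component `V(θ)` of the geodesic with
data `(v',z',s')` satisfies `[V(θ),v] = 0` and `⟨V(θ),v⟩ = 0` — if and only if `v`
satisfies the `J²`-condition. -/
theorem stmt_17
    {𝕍 𝕫 : Type*} [NormedAddCommGroup 𝕍] [InnerProductSpace ℝ 𝕍] [FiniteDimensional ℝ 𝕍]
    [NormedAddCommGroup 𝕫] [InnerProductSpace ℝ 𝕫] [FiniteDimensional ℝ 𝕫]
    (J : 𝕫 →ₗ[ℝ] 𝕍 →ₗ[ℝ] 𝕍)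
    (hJsq : ∀ (z : 𝕫) (v : 𝕍), J z (J z v) = -(‖z‖ ^ 2) • v)
    (hJnorm : ∀ (z : 𝕫) (v : 𝕍), ‖J z v‖ = ‖z‖ * ‖v‖)
    (br : 𝕍 →ₗ[ℝ] 𝕍 →ₗ[ℝ] 𝕫)
    (hbr : ∀ (U V : 𝕍) (Z : 𝕫), ⟪br U V, Z⟫ = ⟪J Z U, V⟫)
    (v : 𝕍) (hv : v ≠ 0) :
    (∀ (v' : 𝕍) (z' : 𝕫) (s' : ℝ),
        ‖v'‖ ^ 2 + ‖z'‖ ^ 2 + s' ^ 2 = 1 → ⟪v', v⟫ = 0 → br v' v = 0 →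
        ∀ θ ∈ Set.Ioo (-1 : ℝ) 1,
          ∀ χ : ℝ, χ = (1 - s' * θ) ^ 2 + ‖z'‖ ^ 2 * θ ^ 2 →
          ∀ Vθ : 𝕍,
            Vθ = (2 * θ * (1 - s' * θ) / χ) • v' + (2 * θ ^ 2 / χ) • J z' v' →
            br Vθ v = 0 ∧ ⟪Vθ, v⟫ = 0) ↔
      (∀ z₁ z₂ : 𝕫, ⟪z₁, z₂⟫ = 0 → ∃ z₃ : 𝕫, J z₁ (J z₂ v) = J z₃ v) := by
  constructor
  · -- totally geodesic → J² condition
    intro H z₁ z₂ hz12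
    set S : Submodule ℝ 𝕍 := (ℝ ∙ v) ⊔ LinearMap.range (J.flip v) with hS
    have hmem : J z₁ (J z₂ v) ∈ S := by
      rw [← Submodule.orthogonal_orthogonal S, Submodule.mem_orthogonal]
      intro u hu
      have hSu : ∀ s ∈ S, ⟪s, u⟫ = 0 := (Submodule.mem_orthogonal S u).mp hu
      have hvu : ⟪u, v⟫ = 0 := by
        rw [real_inner_comm]
        exact hSu v (Submodule.mem_sup_left (Submodule.mem_span_singleton_self v))
      have hbru : br u v = 0 := by
        apply ext_inner_right ℝ
        intro z
        rw [inner_zero_left, hbr, auxC J hJsq hJnorm z u v]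
        have h0 : ⟪J z v, u⟫ = 0 := hSu _ (Submodule.mem_sup_right ⟨z, rfl⟩)
        rw [real_inner_comm] at h0
        rw [h0]; ring
      have key : br (J z₁ u) v = 0 := by
        by_cases hu0 : u = 0
        · rw [hu0]; simp
        · set c : ℝ := Real.sqrt (‖u‖ ^ 2 + ‖z₁‖ ^ 2) with hcdef
          have hupos : 0 < ‖u‖ := norm_pos_iff.2 hu0
          have hsum : (0:ℝ) < ‖u‖ ^ 2 + ‖z₁‖ ^ 2 := by positivity
          have hc2 : c ^ 2 = ‖u‖ ^ 2 + ‖z₁‖ ^ 2 := Real.sq_sqrt hsum.le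
          have hcpos : 0 < c := Real.sqrt_pos.2 hsum
          set v' : 𝕍 := c⁻¹ • u with hv'def
          set z' : 𝕫 := c⁻¹ • z₁ with hz'def
          have hnv' : ‖v'‖ ^ 2 = c⁻¹ ^ 2 * ‖u‖ ^ 2 := by
            rw [hv'def, norm_smul, mul_pow, norm_inv, Real.norm_eq_abs, abs_of_pos hcpos]
          have hnz' : ‖z'‖ ^ 2 = c⁻¹ ^ 2 * ‖z₁‖ ^ 2 := by
            rw [hz'def, norm_smul, mul_pow, norm_inv, Real.norm_eq_abs, abs_of_pos hcpos]
          have hn : ‖v'‖ ^ 2 + ‖z'‖ ^ 2 + (0:ℝ) ^ 2 = 1 := by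
            rw [hnv', hnz']
            have : c⁻¹ ^ 2 * (‖u‖ ^ 2 + ‖z₁‖ ^ 2) = 1 := by
              rw [← hc2]
              field_simp
            linarith [this]
          have hvv' : ⟪v', v⟫ = 0 := by
            rw [hv'def, real_inner_smul_left, hvu, mul_zero]
          have hbrv' : br v' v = 0 := by
            rw [hv'def, map_smul, LinearMap.smul_apply, hbru, smul_zero]
          have hkey := (H v' z' 0 hn hvv' hbrv' (1/2) (by norm_num) _ rfl _ rfl).1
          simp only [map_add, map_smul, LinearMap.add_apply, LinearMap.smul_apply,
            hbrv', smul_zero, zero_add] at hkey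
          have hχ : (0:ℝ) < (1 - 0 * (1/2 : ℝ)) ^ 2 + ‖z'‖ ^ 2 * (1/2 : ℝ) ^ 2 := by
            nlinarith [sq_nonneg ‖z'‖]
          have hcoef : (2 * (1/2 : ℝ) ^ 2 / ((1 - 0 * (1/2 : ℝ)) ^ 2 + ‖z'‖ ^ 2 * (1/2 : ℝ) ^ 2)) ≠ 0 :=
            div_ne_zero (by norm_num) hχ.ne'
          have h0 : br (J z' v') v = 0 := by
            rcases smul_eq_zero.mp hkey with h | h
            · exact absurd h hcoef
            · exact h
          have hJz'v' : J z' v' = (c⁻¹ * c⁻¹) • J z₁ u := by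
            simp only [hz'def, hv'def, map_smul, LinearMap.smul_apply, smul_smul]
          rw [hJz'v', map_smul, LinearMap.smul_apply] at h0
          rcases smul_eq_zero.mp h0 with h | h
          · exact absurd h (by positivity)
          · exact h
      have e1 := auxC J hJsq hJnorm z₁ u (J z₂ v)
      have e2 := auxC J hJsq hJnorm z₂ (J z₁ u) v
      have e3 : ⟪J z₂ (J z₁ u), v⟫ = 0 := by rw [← hbr, key, inner_zero_left]
      linarith
    rw [hS, Submodule.mem_sup] at hmem
    obtain ⟨y, hy, w, hw, hyw⟩ := hmem
    obtain ⟨cc, rfl⟩ := Submodule.mem_span_singleton.mp hy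
    obtain ⟨z₃, rfl⟩ := hw
    rw [LinearMap.flip_apply] at hyw
    have hl : ⟪J z₁ (J z₂ v), v⟫ = 0 := by
      rw [auxC J hJsq hJnorm z₁ (J z₂ v) v]
      have hd := auxD J hJnorm z₂ z₁ v
      rw [hd, real_inner_comm z₁ z₂, hz12]
      ring
    have hccv : ⟪cc • v + J z₃ v, v⟫ = cc * ‖v‖ ^ 2 := by
      rw [inner_add_left, real_inner_smul_left, real_inner_self_eq_norm_sq,
        auxB J hJsq hJnorm z₃ v]
      ring
    have hcc : cc = 0 := by
      rw [hyw, hl] at hccv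
      have hvn : (0:ℝ) < ‖v‖ ^ 2 := by
        have : 0 < ‖v‖ := norm_pos_iff.2 hv
        positivity
      rcases mul_eq_zero.mp hccv.symm with h | h
      · exact h
      · exact absurd h hvn.ne'
    refine ⟨z₃, ?_⟩
    rw [← hyw, hcc, zero_smul, zero_add]
  · -- J² condition → totally geodesic
    intro hJ2 v' z' s' _ hvv hbrv θ _ χ hχ Vθ hVθ
    have hJvv : ⟪J z' v', v⟫ = 0 := by rw [← hbr, hbrv, inner_zero_left]
    have key : br (J z' v') v = 0 := by
      apply ext_inner_right ℝ
      intro z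
      rw [inner_zero_left, hbr]
      by_cases hz' : z' = 0
      · simp [hz']
      · have hz'n : ‖z'‖ ≠ 0 := norm_ne_zero_iff.2 hz'
        set cz : ℝ := ⟪z, z'⟫ / ‖z'‖ ^ 2 with hcz
        set w : 𝕫 := z - cz • z' with hw
        have hzw : z = cz • z' + w := by rw [hw]; abel
        have hwz' : ⟪z', w⟫ = 0 := by
          rw [hw, inner_sub_right, real_inner_smul_right, real_inner_self_eq_norm_sq,
            real_inner_comm z z', hcz]
          field_simp
          ring
        obtain ⟨z₃, hz₃⟩ := hJ2 z' w hwz'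
        have expand : ⟪J z (J z' v'), v⟫
            = cz * ⟪J z' (J z' v'), v⟫ + ⟪J w (J z' v'), v⟫ := by
          conv_lhs => rw [hzw]
          simp [map_add, map_smul, LinearMap.add_apply, LinearMap.smul_apply,
            inner_add_left, real_inner_smul_left]
        have t1 : ⟪J z' (J z' v'), v⟫ = 0 := by
          rw [hJsq, real_inner_smul_left, hvv, mul_zero]
        have t2 : ⟪J w (J z' v'), v⟫ = 0 := by
          rw [auxC J hJsq hJnorm w (J z' v') v, auxC J hJsq hJnorm z' v' (J w v), hz₃]
          have h5 : ⟪J z₃ v', v⟫ = 0 := by rw [← hbr, hbrv, inner_zero_left]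
          have h6 := auxC J hJsq hJnorm z₃ v' v
          linarith
        rw [expand, t1, t2]
        ring
    constructor
    · rw [hVθ]
      simp [map_add, map_smul, LinearMap.add_apply, LinearMap.smul_apply, hbrv, key]
    · rw [hVθ, inner_add_left, real_inner_smul_left, real_inner_smul_left, hvv, hJvv]
      ring
end
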